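/- arXiv:math/0410164 — 3 statements merged into one kernel-verified Lean document; each statement's English description precedes it below -/
import Mathlib

section
/- Let ν₁, ν₂ be finite nonnegative measures on ℝ, let M > 0, and define the truncation ν^M = (min(ν(ℝ), M)/ν(ℝ)) · ν (with ν^M = 0 if ν = 0). Then for every bounded 1-Lipschitz function g with |g| ≤ 1, |∫ g dν₁^M − ∫ g dν₂^M| ≤ 3 ρ(ν₁, ν₂), where ρ(ν₁, ν₂) = sup over such g of |∫ g dν₁ − ∫ g dν₂|. -/
open MeasureTheory Real

/-- The truncation of a finite measure `ν` at total mass `M`: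
`ν^M = (min(ν(ℝ), M)/ν(ℝ)) · ν` (with `ν^M = 0` if `ν = 0`). -/
noncomputable def truncMeasure (ν : Measure ℝ) (M : ℝ) : Measure ℝ :=
  (ENNReal.ofReal (min (ν Set.univ).toReal M / (ν Set.univ).toReal)) • ν

lemma abs_min_sub_min_le_abs' (a b M : ℝ) : |min a M - min b M| ≤ |a - b| := by
  rcases le_total a M with h | h <;> rcases le_total b M with h' | h' <;>
    simp only [min_eq_left, min_eq_right, h, h'] <;>
    rw [abs_le] <;> constructor <;>
    cases abs_cases (a - b) <;> linarith

/-- If `ρ` bounds `|∫ g dν₁ − ∫ g dν₂|` over all continuous `g` with `|g| ≤ 1` and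
Lipschitz constant `1`, then the truncated measures at level `M` satisfy
`|∫ g dν₁^M − ∫ g dν₂^M| ≤ 3ρ` for all such `g`. -/
theorem truncation_bounded_lipschitz_estimate
    (ν₁ ν₂ : Measure ℝ) [IsFiniteMeasure ν₁] [IsFiniteMeasure ν₂]
    (M : ℝ) (hM : 0 < M) (ρ : ℝ)
    (hρ : ∀ g : ℝ → ℝ, Continuous g → (∀ x, |g x| ≤ 1) → LipschitzWith 1 g →
      |∫ x, g x ∂ν₁ - ∫ x, g x ∂ν₂| ≤ ρ)
    (g : ℝ → ℝ) (hgc : Continuous g) (hgb : ∀ x, |g x| ≤ 1)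
    (hgl : LipschitzWith 1 g) :
    |∫ x, g x ∂(truncMeasure ν₁ M) - ∫ x, g x ∂(truncMeasure ν₂ M)| ≤ 3 * ρ := by
  have hI : |∫ x, g x ∂ν₁ - ∫ x, g x ∂ν₂| ≤ ρ := hρ g hgc hgb hgl
  have hρ0 : 0 ≤ ρ := le_trans (abs_nonneg _) hI
  set a₁ : ℝ := (ν₁ Set.univ).toReal with ha₁def
  set a₂ : ℝ := (ν₂ Set.univ).toReal with ha₂def
  have ha₁ : 0 ≤ a₁ := ENNReal.toReal_nonneg
  have ha₂ : 0 ≤ a₂ := ENNReal.toReal_nonneg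
  have ha : |a₁ - a₂| ≤ ρ := by
    have := hρ (fun _ => 1) continuous_const (fun x => by norm_num)
      ((LipschitzWith.const 1).weaken (by norm_num))
    simpa [integral_const, smul_eq_mul, measureReal_def] using this
  set c₁ : ℝ := min a₁ M / a₁ with hc₁def
  set c₂ : ℝ := min a₂ M / a₂ with hc₂def
  have hc₁0 : 0 ≤ c₁ := div_nonneg (le_min ha₁ hM.le) ha₁
  have hc₂0 : 0 ≤ c₂ := div_nonneg (le_min ha₂ hM.le) ha₂
  have hc₁1 : c₁ ≤ 1 := div_le_one_of_le₀ (min_le_left _ _) ha₁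
  have hc₂1 : c₂ ≤ 1 := div_le_one_of_le₀ (min_le_left _ _) ha₂
  set I₁ : ℝ := ∫ x, g x ∂ν₁ with hI₁def
  set I₂ : ℝ := ∫ x, g x ∂ν₂ with hI₂def
  have hI₂bound : |I₂| ≤ a₂ := by
    have := norm_integral_le_of_norm_le_const (μ := ν₂) (C := 1) (f := g)
      (Filter.Eventually.of_forall fun x => by simpa using hgb x)
    simpa [measureReal_def] using this
  have hmin : |min a₁ M - min a₂ M| ≤ |a₁ - a₂| := abs_min_sub_min_le_abs' a₁ a₂ M
  -- c₂ * a₂ = min a₂ M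
  have hc₂a₂ : c₂ * a₂ = min a₂ M := by
    rcases eq_or_lt_of_le ha₂ with h | h
    · simp [hc₂def, ← h, min_eq_left hM.le]
    · rw [hc₂def, div_mul_cancel₀ _ h.ne']
  have key : |c₁ * a₂ - c₂ * a₂| ≤ 2 * ρ := by
    rw [hc₂a₂]
    rcases eq_or_lt_of_le ha₁ with h | h
    · have hm : min a₁ M = 0 := by rw [← h]; exact min_eq_left hM.le
      have hc₁ : c₁ = 0 := by simp [hc₁def, hm]
      have : |min a₂ M| ≤ ρ := by
        rw [abs_of_nonneg (le_min ha₂ hM.le)]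
        calc min a₂ M ≤ a₂ := min_le_left _ _
          _ = |a₁ - a₂| := by rw [← h]; simp [abs_of_nonneg ha₂]
          _ ≤ ρ := ha
      calc |c₁ * a₂ - min a₂ M| = |min a₂ M| := by
            rw [hc₁, zero_mul, zero_sub, abs_neg]
        _ ≤ ρ := this
        _ ≤ 2 * ρ := by linarith
    · have hc₁a₁ : c₁ * a₁ = min a₁ M := by rw [hc₁def, div_mul_cancel₀ _ h.ne']
      have : c₁ * a₂ - min a₂ M = c₁ * (a₂ - a₁) + (min a₁ M - min a₂ M) := by
        rw [← hc₁a₁]; ring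
      rw [this]
      calc |c₁ * (a₂ - a₁) + (min a₁ M - min a₂ M)|
          ≤ |c₁ * (a₂ - a₁)| + |min a₁ M - min a₂ M| := abs_add_le _ _
        _ ≤ 1 * |a₂ - a₁| + |a₁ - a₂| := by
            refine add_le_add ?_ hmin
            rw [abs_mul, abs_of_nonneg hc₁0]
            exact mul_le_mul_of_nonneg_right hc₁1 (abs_nonneg _)
        _ = |a₁ - a₂| + |a₁ - a₂| := by rw [abs_sub_comm a₂ a₁]; ring
        _ ≤ 2 * ρ := by linarith
  have hsplit : |c₁ * I₁ - c₂ * I₂| ≤ 3 * ρ := by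
    have h1 : |c₁ * (I₁ - I₂)| ≤ ρ := by
      rw [abs_mul, abs_of_nonneg hc₁0]
      calc c₁ * |I₁ - I₂| ≤ 1 * ρ := mul_le_mul hc₁1 hI (abs_nonneg _) zero_le_one
        _ = ρ := one_mul _
    have h2 : |(c₁ - c₂) * I₂| ≤ 2 * ρ := by
      rw [abs_mul]
      calc |c₁ - c₂| * |I₂| ≤ |c₁ - c₂| * a₂ := by gcongr
        _ = |(c₁ - c₂) * a₂| := by rw [abs_mul, abs_of_nonneg ha₂]
        _ = |c₁ * a₂ - c₂ * a₂| := by ring_nf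
        _ ≤ 2 * ρ := key
    calc |c₁ * I₁ - c₂ * I₂| = |c₁ * (I₁ - I₂) + (c₁ - c₂) * I₂| := by ring_nf
      _ ≤ |c₁ * (I₁ - I₂)| + |(c₁ - c₂) * I₂| := abs_add_le _ _
      _ ≤ ρ + 2 * ρ := add_le_add h1 h2
      _ = 3 * ρ := by ring
  rw [truncMeasure, truncMeasure, integral_smul_measure, integral_smul_measure,
    ENNReal.toReal_ofReal hc₁0, ENNReal.toReal_ofReal hc₂0]
  simpa [smul_eq_mul] using hsplit
end

section
/- With d_ε as above, there is a constant K (depending on ε) such that |d_ε(x₁, ν₁) − d_ε(x₂, ν₂)| ≤ K √(|x₁ − x₂|² + ρ(ν₁, ν₂)²) for all x₁, x₂ ∈ ℝ and finite measures ν₁, ν₂, where ρ is the bounded-Lipschitz distance. -/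
open MeasureTheory Real

/-- The Gaussian density with variance `ε`. -/
noncomputable def gaussKernel (ε x : ℝ) : ℝ :=
  (Real.sqrt (2 * π * ε))⁻¹ * Real.exp (-x ^ 2 / (2 * ε))

/-- The bounded-Lipschitz (Fortet–Mourier) distance between finite measures on `ℝ`. -/
noncomputable def blDist (ν₁ ν₂ : Measure ℝ) : ℝ :=
  sSup {r : ℝ | ∃ g : ℝ → ℝ, Continuous g ∧ (∀ x, |g x| ≤ 1) ∧ LipschitzWith 1 g ∧
    r = |∫ x, g x ∂ν₁ - ∫ x, g x ∂ν₂|}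

/-! ### Auxiliary lemmas -/

lemma aux_abs_mul_exp_le (ε : ℝ) (hε : 0 < ε) (x : ℝ) :
    |x| * Real.exp (-x^2/(2*ε)) ≤ Real.sqrt (2*ε) := by
  set s := Real.sqrt (2*ε) with hsdef
  have hs2 : s^2 = 2*ε := Real.sq_sqrt (by positivity)
  have hspos : 0 < s := Real.sqrt_pos.mpr (by positivity)
  have hpos : (0:ℝ) < 1 + x^2/(2*ε) := by positivity
  have he : Real.exp (-x^2/(2*ε)) ≤ (1 + x^2/(2*ε))⁻¹ := by
    rw [neg_div, Real.exp_neg]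
    apply inv_anti₀ hpos
    have := Real.add_one_le_exp (x^2/(2*ε))
    linarith
  calc |x| * Real.exp (-x^2/(2*ε)) ≤ |x| * (1 + x^2/(2*ε))⁻¹ :=
        mul_le_mul_of_nonneg_left he (abs_nonneg x)
    _ ≤ s := by
        rw [inv_eq_one_div, mul_one_div, div_le_iff₀ hpos]
        have key : |x| * s ≤ s^2 + x^2 := by nlinarith [sq_nonneg (s - |x|), sq_abs x]
        have h2e : s * (1 + x^2/(2*ε)) = (s^2 + x^2)/s := by
          rw [← hs2]; field_simp
        rw [h2e, le_div_iff₀ hspos]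
        linarith

lemma aux_exp_lip (ε : ℝ) (hε : 0 < ε) (a b : ℝ) :
    |Real.exp (-a^2/(2*ε)) - Real.exp (-b^2/(2*ε))| ≤ (Real.sqrt (2*ε)/ε) * |a - b| := by
  have hb := aux_abs_mul_exp_le ε hε
  have hd : ∀ x : ℝ, HasDerivAt (fun t => Real.exp (-t^2/(2*ε)))
      (Real.exp (-x^2/(2*ε)) * (-(2*x^1)/(2*ε))) x := by
    intro x
    exact (((hasDerivAt_pow 2 x).neg).div_const (2*ε)).exp
  have := Convex.norm_image_sub_le_of_norm_hasDerivWithin_le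
    (f := fun t => Real.exp (-t^2/(2*ε)))
    (f' := fun x => Real.exp (-x^2/(2*ε)) * (-(2*x^1)/(2*ε)))
    (C := Real.sqrt (2*ε)/ε) (s := Set.univ)
    (fun x _ => (hd x).hasDerivWithinAt)
    (fun x _ => by
      have hx := hb x
      simp only [Real.norm_eq_abs, pow_one]
      rw [abs_mul, abs_of_pos (Real.exp_pos _), abs_div, abs_neg]
      have h2 : |2*x| = 2*|x| := by rw [abs_mul]; simp
      have h3 : |2*ε| = 2*ε := abs_of_pos (by linarith)
      rw [h2, h3]
      have heq : Real.exp (-x^2/(2*ε)) * (2*|x|/(2*ε)) = (|x| * Real.exp (-x^2/(2*ε)))/ε := by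
        field_simp
      rw [heq]
      gcongr)
    convex_univ (Set.mem_univ b) (Set.mem_univ a)
  simpa [Real.norm_eq_abs] using this

lemma integrable_of_bdd {ν : Measure ℝ} [IsFiniteMeasure ν] {g : ℝ → ℝ} (hc : Continuous g)
    {C : ℝ} (hb : ∀ x, |g x| ≤ C) : Integrable g ν := by
  refine Integrable.mono' (integrable_const C) hc.aestronglyMeasurable ?_
  filter_upwards with x
  simpa [Real.norm_eq_abs] using hb x

lemma integral_abs_le {ν : Measure ℝ} [IsFiniteMeasure ν] {g : ℝ → ℝ} (hc : Continuous g)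
    {C : ℝ} (hb : ∀ x, |g x| ≤ C) : |∫ x, g x ∂ν| ≤ C * (ν Set.univ).toReal := by
  calc |∫ x, g x ∂ν| ≤ ∫ x, |g x| ∂ν := by
        simpa [Real.norm_eq_abs] using norm_integral_le_integral_norm g (μ := ν)
    _ ≤ ∫ _x, C ∂ν := by
        refine integral_mono ((integrable_of_bdd hc hb).abs) (integrable_const C) ?_
        intro x; exact hb x
    _ = C * (ν Set.univ).toReal := by simp [integral_const]; exact mul_comm _ _

lemma blSet_bdd (ν₁ ν₂ : Measure ℝ) [IsFiniteMeasure ν₁] [IsFiniteMeasure ν₂] :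
    BddAbove {r : ℝ | ∃ g : ℝ → ℝ, Continuous g ∧ (∀ x, |g x| ≤ 1) ∧ LipschitzWith 1 g ∧
    r = |∫ x, g x ∂ν₁ - ∫ x, g x ∂ν₂|} := by
  refine ⟨(ν₁ Set.univ).toReal + (ν₂ Set.univ).toReal, ?_⟩
  rintro r ⟨g, hc, hb, _, rfl⟩
  calc |∫ x, g x ∂ν₁ - ∫ x, g x ∂ν₂| ≤ |∫ x, g x ∂ν₁| + |∫ x, g x ∂ν₂| := abs_sub _ _
    _ ≤ 1 * (ν₁ Set.univ).toReal + 1 * (ν₂ Set.univ).toReal :=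
        add_le_add (integral_abs_le hc hb) (integral_abs_le hc hb)
    _ = _ := by ring

lemma blDist_nonneg (ν₁ ν₂ : Measure ℝ) [IsFiniteMeasure ν₁] [IsFiniteMeasure ν₂] :
    0 ≤ blDist ν₁ ν₂ := by
  apply le_csSup (blSet_bdd ν₁ ν₂)
  exact ⟨fun _ => 0, continuous_const, fun x => by norm_num,
    (LipschitzWith.const 0).weaken (by norm_num), by simp⟩

lemma mass_diff_le (ν₁ ν₂ : Measure ℝ) [IsFiniteMeasure ν₁] [IsFiniteMeasure ν₂] :
    |(ν₁ Set.univ).toReal - (ν₂ Set.univ).toReal| ≤ blDist ν₁ ν₂ := by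
  apply le_csSup (blSet_bdd ν₁ ν₂)
  exact ⟨fun _ => 1, continuous_const, fun x => by norm_num,
    (LipschitzWith.const 1).weaken (by norm_num), by simp [integral_const]; rfl⟩

lemma integral_diff_le (ν₁ ν₂ : Measure ℝ) [IsFiniteMeasure ν₁] [IsFiniteMeasure ν₂]
    (g : ℝ → ℝ) (C : ℝ) (hC : 0 < C) (hc : Continuous g) (hb : ∀ x, |g x| ≤ C)
    (hl : ∀ a b, |g a - g b| ≤ C * |a - b|) :
    |∫ x, g x ∂ν₁ - ∫ x, g x ∂ν₂| ≤ C * blDist ν₁ ν₂ := by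
  set h : ℝ → ℝ := fun x => C⁻¹ * g x with hh
  have hmem : |∫ x, h x ∂ν₁ - ∫ x, h x ∂ν₂| ≤ blDist ν₁ ν₂ := by
    apply le_csSup (blSet_bdd ν₁ ν₂)
    refine ⟨h, continuous_const.mul hc, ?_, ?_, rfl⟩
    · intro x
      rw [hh]
      simp only []
      rw [abs_mul, abs_inv, abs_of_pos hC]
      rw [inv_mul_le_iff₀ hC, mul_one]
      exact hb x
    · apply LipschitzWith.of_dist_le_mul
      intro a b
      simp only [Real.dist_eq, NNReal.coe_one, one_mul, hh]
      rw [← mul_sub, abs_mul, abs_inv, abs_of_pos hC, inv_mul_le_iff₀ hC]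
      exact hl a b
  have hint : ∀ (ν : Measure ℝ) [IsFiniteMeasure ν], ∫ x, h x ∂ν = C⁻¹ * ∫ x, g x ∂ν := by
    intro ν _
    rw [hh]
    exact MeasureTheory.integral_const_mul _ _
  rw [hint ν₁, hint ν₂, ← mul_sub, abs_mul, abs_inv, abs_of_pos hC] at hmem
  calc |∫ x, g x ∂ν₁ - ∫ x, g x ∂ν₂|
      = C * (C⁻¹ * |∫ x, g x ∂ν₁ - ∫ x, g x ∂ν₂|) := by field_simp
    _ ≤ C * blDist ν₁ ν₂ := mul_le_mul_of_nonneg_left hmem hC.le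

lemma coef_diff (M m₁ m₂ : ℝ) (hM : 0 < M) (h1 : 0 ≤ m₁) (h2 : 0 ≤ m₂) :
    |min m₁ M / m₁ - min m₂ M / m₂| * m₂ ≤ |m₁ - m₂| := by
  rcases eq_or_lt_of_le h2 with h|h2p
  · rw [← h]; simp [abs_nonneg]
  rcases eq_or_lt_of_le h1 with h|h1p
  · rw [← h]
    rw [div_zero, zero_sub, zero_sub, abs_neg, abs_neg,
      abs_of_nonneg (div_nonneg (le_min h2 hM.le) h2), abs_of_nonneg h2,
      div_mul_cancel₀ _ h2p.ne']
    exact min_le_left _ _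
  · have hne1 : m₁ ≠ 0 := ne_of_gt h1p
    have hne2 : m₂ ≠ 0 := ne_of_gt h2p
    have e1 : min m₁ M / m₁ - min m₂ M / m₂ = (min m₁ M * m₂ - min m₂ M * m₁)/(m₁*m₂) := by
      field_simp
    rw [e1, abs_div, abs_of_pos (mul_pos h1p h2p), div_mul_eq_mul_div,
      div_le_iff₀ (mul_pos h1p h2p)]
    rcases le_total m₁ M with hm1|hm1 <;> rcases le_total m₂ M with hm2|hm2 <;>
      simp only [min_eq_left, min_eq_right, hm1, hm2]
    · rw [show m₁ * m₂ - m₂ * m₁ = 0 by ring]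
      simp only [abs_zero, zero_mul]
      positivity
    · rcases abs_cases (m₁ * m₂ - M * m₁) with ⟨he, hsgn⟩|⟨he, hsgn⟩ <;> rw [he]
      · nlinarith [mul_le_mul_of_nonneg_right
          (show m₂ - M ≤ |m₁ - m₂| by nlinarith [neg_abs_le (m₁ - m₂)])
          (mul_pos h1p h2p).le]
      · nlinarith [mul_nonneg h1 (sub_nonneg.mpr hm2), abs_nonneg (m₁ - m₂),
          mul_nonneg (abs_nonneg (m₁ - m₂)) (mul_pos h1p h2p).le]
    · rcases abs_cases (M * m₂ - m₂ * m₁) with ⟨he, hsgn⟩|⟨he, hsgn⟩ <;> rw [he]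
      · nlinarith [mul_nonneg (sub_nonneg.mpr hm1) h2,
          mul_nonneg (abs_nonneg (m₁ - m₂)) (mul_pos h1p h2p).le, h2]
      · nlinarith [mul_le_mul_of_nonneg_right
          (show m₁ - M ≤ |m₁ - m₂| by nlinarith [le_abs_self (m₁ - m₂)])
          (mul_pos h1p h2p).le,
          mul_nonneg (mul_nonneg (sub_nonneg.mpr hm1) (sub_nonneg.mpr (hm2.trans hm1))) h2]
    · rw [← mul_sub, abs_mul, abs_of_pos hM, abs_sub_comm m₂ m₁]
      nlinarith [abs_nonneg (m₁ - m₂), mul_le_mul_of_nonneg_right hm1 h2,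
        mul_nonneg (abs_nonneg (m₁ - m₂)) h2]

lemma add_le_sqrt_two_mul (a b : ℝ) (ha : 0 ≤ a) (hb : 0 ≤ b) :
    a + b ≤ Real.sqrt 2 * Real.sqrt (a^2 + b^2) := by
  rw [← Real.sqrt_mul (by norm_num : (0:ℝ) ≤ 2)]
  rw [show a + b = Real.sqrt ((a+b)^2) from (Real.sqrt_sq (by linarith)).symm]
  apply Real.sqrt_le_sqrt
  nlinarith [sq_nonneg (a - b)]

/-- For `d_ε(x, ν) = −∫ p_ε(x − y) ν^ε(dy)` there is a constant `K` (depending on `ε`)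
such that `|d_ε(x₁, ν₁) − d_ε(x₂, ν₂)| ≤ K √(|x₁ − x₂|² + ρ(ν₁, ν₂)²)`. -/
theorem d_eps_lipschitz (ε : ℝ) (hε : 0 < ε) :
    ∃ K : ℝ, ∀ (x₁ x₂ : ℝ) (ν₁ ν₂ : Measure ℝ),
      IsFiniteMeasure ν₁ → IsFiniteMeasure ν₂ →
      |(-∫ y, gaussKernel ε (x₁ - y) ∂(truncMeasure ν₁ ε⁻¹)) -
        (-∫ y, gaussKernel ε (x₂ - y) ∂(truncMeasure ν₂ ε⁻¹))|
        ≤ K * Real.sqrt (|x₁ - x₂| ^ 2 + (blDist ν₁ ν₂) ^ 2) := by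
  have hπ := Real.pi_pos
  set B : ℝ := (Real.sqrt (2 * π * ε))⁻¹ with hB
  have hBpos : 0 < B := inv_pos.mpr (Real.sqrt_pos.mpr (by positivity))
  set L : ℝ := B * (Real.sqrt (2*ε)/ε) with hL
  have hLpos : 0 < L := mul_pos hBpos (div_pos (Real.sqrt_pos.mpr (by positivity)) hε)
  set C₀ : ℝ := max B L with hC0
  have hC0pos : 0 < C₀ := lt_of_lt_of_le hBpos (le_max_left _ _)
  set K₀ : ℝ := max (L * ε⁻¹) (C₀ + B) with hK0
  have hK0pos : 0 < K₀ := lt_of_lt_of_le (by positivity) (le_max_right _ _)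
  refine ⟨Real.sqrt 2 * K₀, ?_⟩
  intro x₁ x₂ ν₁ ν₂ hν₁ hν₂
  haveI := hν₁; haveI := hν₂
  -- kernel properties
  have hker_nonneg : ∀ x, 0 ≤ gaussKernel ε x := by
    intro x; unfold gaussKernel; positivity
  have hker_le : ∀ x, gaussKernel ε x ≤ B := by
    intro x
    unfold gaussKernel
    rw [hB]
    nth_rewrite 2 [← mul_one ((Real.sqrt (2 * π * ε))⁻¹)]
    apply mul_le_mul_of_nonneg_left _ (by positivity)
    rw [Real.exp_le_one_iff]
    have : (0:ℝ) ≤ x^2 := sq_nonneg x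
    have h2 : (0:ℝ) < 2*ε := by linarith
    rw [neg_div]
    simp only [neg_nonpos]
    positivity
  have hker_abs : ∀ x, |gaussKernel ε x| ≤ B := by
    intro x; rw [abs_of_nonneg (hker_nonneg x)]; exact hker_le x
  have hker_lip : ∀ a b, |gaussKernel ε a - gaussKernel ε b| ≤ L * |a - b| := by
    intro a b
    unfold gaussKernel
    rw [← mul_sub, abs_mul, abs_of_pos (show (0:ℝ) < (Real.sqrt (2 * π * ε))⁻¹ from hBpos)]
    calc (Real.sqrt (2 * π * ε))⁻¹ * |Real.exp (-a ^ 2 / (2 * ε)) - Real.exp (-b ^ 2 / (2 * ε))|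
        ≤ (Real.sqrt (2 * π * ε))⁻¹ * ((Real.sqrt (2*ε)/ε) * |a - b|) :=
          mul_le_mul_of_nonneg_left (aux_exp_lip ε hε a b) (by positivity)
      _ = L * |a - b| := by rw [hL, hB]; ring
  have hker_cont : Continuous (gaussKernel ε) := by
    unfold gaussKernel
    exact continuous_const.mul (((continuous_pow 2).neg.div_const _).rexp)
  have hI_cont : ∀ x : ℝ, Continuous (fun y => gaussKernel ε (x - y)) :=
    fun x => hker_cont.comp (continuous_const.sub continuous_id)
  have hI_babs : ∀ (x y : ℝ), |gaussKernel ε (x - y)| ≤ B := fun x y => hker_abs _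
  have hint : ∀ (x : ℝ) (ν : Measure ℝ) [IsFiniteMeasure ν],
      Integrable (fun y => gaussKernel ε (x - y)) ν := by
    intro x ν _
    exact integrable_of_bdd (hI_cont x) (hI_babs x)
  -- masses and coefficients
  set m₁ : ℝ := (ν₁ Set.univ).toReal with hm₁def
  set m₂ : ℝ := (ν₂ Set.univ).toReal with hm₂def
  have hm₁ : 0 ≤ m₁ := ENNReal.toReal_nonneg
  have hm₂ : 0 ≤ m₂ := ENNReal.toReal_nonneg
  have hM : 0 < ε⁻¹ := inv_pos.mpr hε
  set c₁ : ℝ := min m₁ ε⁻¹ / m₁ with hc₁def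
  set c₂ : ℝ := min m₂ ε⁻¹ / m₂ with hc₂def
  have hc₁0 : 0 ≤ c₁ := div_nonneg (le_min hm₁ hM.le) hm₁
  have hc₂0 : 0 ≤ c₂ := div_nonneg (le_min hm₂ hM.le) hm₂
  have hc₁1 : c₁ ≤ 1 := div_le_one_of_le₀ (min_le_left _ _) hm₁
  have hc₁m : c₁ * m₁ ≤ ε⁻¹ := by
    rcases eq_or_lt_of_le hm₁ with h|h
    · rw [← h]; simpa using hM.le
    · rw [hc₁def, div_mul_cancel₀ _ h.ne']
      exact min_le_right _ _
  -- the integrals over the truncated measures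
  have trunc_int : ∀ (ν : Measure ℝ) (x : ℝ),
      ∫ y, gaussKernel ε (x - y) ∂(truncMeasure ν ε⁻¹)
        = (min (ν Set.univ).toReal ε⁻¹ / (ν Set.univ).toReal) * ∫ y, gaussKernel ε (x - y) ∂ν := by
    intro ν x
    rw [truncMeasure, integral_smul_measure,
      ENNReal.toReal_ofReal (div_nonneg (le_min ENNReal.toReal_nonneg hM.le)
        ENNReal.toReal_nonneg), smul_eq_mul]
  set I : Measure ℝ → ℝ → ℝ := fun ν x => ∫ y, gaussKernel ε (x - y) ∂ν with hI
  have hgoal_eq : |(-∫ y, gaussKernel ε (x₁ - y) ∂(truncMeasure ν₁ ε⁻¹)) -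
        (-∫ y, gaussKernel ε (x₂ - y) ∂(truncMeasure ν₂ ε⁻¹))|
      = |c₁ * I ν₁ x₁ - c₂ * I ν₂ x₂| := by
    rw [trunc_int, trunc_int, neg_sub_neg, abs_sub_comm, hI, hc₁def, hc₂def, hm₁def, hm₂def]
  rw [hgoal_eq]
  -- Term 1 : shift in x
  have hdiff : |I ν₁ x₁ - I ν₁ x₂| ≤ L * |x₁ - x₂| * m₁ := by
    rw [hI]
    simp only []
    rw [← integral_sub (hint x₁ ν₁) (hint x₂ ν₁)]
    calc |∫ y, (gaussKernel ε (x₁ - y) - gaussKernel ε (x₂ - y)) ∂ν₁|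
        ≤ ∫ y, |gaussKernel ε (x₁ - y) - gaussKernel ε (x₂ - y)| ∂ν₁ := by
          simpa [Real.norm_eq_abs] using
            norm_integral_le_integral_norm
              (fun y => gaussKernel ε (x₁ - y) - gaussKernel ε (x₂ - y)) (μ := ν₁)
      _ ≤ ∫ _y, L * |x₁ - x₂| ∂ν₁ := by
          refine integral_mono (((hint x₁ ν₁).sub (hint x₂ ν₁)).abs) (integrable_const _) ?_
          intro y
          have := hker_lip (x₁ - y) (x₂ - y)
          simpa [show x₁ - y - (x₂ - y) = x₁ - x₂ by ring] using this
      _ = L * |x₁ - x₂| * m₁ := by rw [integral_const]; simp [hm₁def]; exact mul_comm _ _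
  have T1 : c₁ * |I ν₁ x₁ - I ν₁ x₂| ≤ L * ε⁻¹ * |x₁ - x₂| := by
    calc c₁ * |I ν₁ x₁ - I ν₁ x₂| ≤ c₁ * (L * |x₁ - x₂| * m₁) :=
          mul_le_mul_of_nonneg_left hdiff hc₁0
      _ = (c₁ * m₁) * (L * |x₁ - x₂|) := by ring
      _ ≤ ε⁻¹ * (L * |x₁ - x₂|) :=
          mul_le_mul_of_nonneg_right hc₁m (by positivity)
      _ = L * ε⁻¹ * |x₁ - x₂| := by ring
  -- Term 2 : change of measure
  have T2 : c₁ * |I ν₁ x₂ - I ν₂ x₂| ≤ C₀ * blDist ν₁ ν₂ := by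
    have h2 : |I ν₁ x₂ - I ν₂ x₂| ≤ C₀ * blDist ν₁ ν₂ := by
      apply integral_diff_le ν₁ ν₂ _ C₀ hC0pos (hI_cont x₂)
      · intro y
        exact le_trans (hI_babs x₂ y) (le_max_left _ _)
      · intro a b
        calc |gaussKernel ε (x₂ - a) - gaussKernel ε (x₂ - b)| ≤ L * |x₂ - a - (x₂ - b)| :=
              hker_lip _ _
          _ = L * |a - b| := by rw [show x₂ - a - (x₂ - b) = -(a - b) by ring, abs_neg]
          _ ≤ C₀ * |a - b| := mul_le_mul_of_nonneg_right (le_max_right _ _) (abs_nonneg _)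
    calc c₁ * |I ν₁ x₂ - I ν₂ x₂| ≤ 1 * |I ν₁ x₂ - I ν₂ x₂| :=
          mul_le_mul_of_nonneg_right hc₁1 (abs_nonneg _)
      _ = |I ν₁ x₂ - I ν₂ x₂| := one_mul _
      _ ≤ C₀ * blDist ν₁ ν₂ := h2
  -- Term 3 : change of coefficient
  have T3 : |c₁ - c₂| * |I ν₂ x₂| ≤ B * blDist ν₁ ν₂ := by
    have hIb : |I ν₂ x₂| ≤ B * m₂ := integral_abs_le (hI_cont x₂) (hI_babs x₂)
    calc |c₁ - c₂| * |I ν₂ x₂| ≤ |c₁ - c₂| * (B * m₂) :=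
          mul_le_mul_of_nonneg_left hIb (abs_nonneg _)
      _ = B * (|c₁ - c₂| * m₂) := by ring
      _ ≤ B * |m₁ - m₂| := by
          apply mul_le_mul_of_nonneg_left _ hBpos.le
          exact coef_diff ε⁻¹ m₁ m₂ hM hm₁ hm₂
      _ ≤ B * blDist ν₁ ν₂ := by
          apply mul_le_mul_of_nonneg_left _ hBpos.le
          rw [hm₁def, hm₂def]
          exact mass_diff_le ν₁ ν₂
  -- combine
  have hsplit : c₁ * I ν₁ x₁ - c₂ * I ν₂ x₂
      = c₁ * (I ν₁ x₁ - I ν₁ x₂) + c₁ * (I ν₁ x₂ - I ν₂ x₂) + (c₁ - c₂) * I ν₂ x₂ := by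
    ring
  have hmain : |c₁ * I ν₁ x₁ - c₂ * I ν₂ x₂|
      ≤ L * ε⁻¹ * |x₁ - x₂| + C₀ * blDist ν₁ ν₂ + B * blDist ν₁ ν₂ := by
    rw [hsplit]
    calc |c₁ * (I ν₁ x₁ - I ν₁ x₂) + c₁ * (I ν₁ x₂ - I ν₂ x₂) + (c₁ - c₂) * I ν₂ x₂|
        ≤ |c₁ * (I ν₁ x₁ - I ν₁ x₂)| + |c₁ * (I ν₁ x₂ - I ν₂ x₂)| + |(c₁ - c₂) * I ν₂ x₂| :=
          abs_add_three _ _ _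
      _ = c₁ * |I ν₁ x₁ - I ν₁ x₂| + c₁ * |I ν₁ x₂ - I ν₂ x₂| + |c₁ - c₂| * |I ν₂ x₂| := by
          rw [abs_mul, abs_mul, abs_mul, abs_of_nonneg hc₁0]
      _ ≤ _ := add_le_add (add_le_add T1 T2) T3
  have hρ : 0 ≤ blDist ν₁ ν₂ := blDist_nonneg ν₁ ν₂
  have habs : 0 ≤ |x₁ - x₂| := abs_nonneg _
  calc |c₁ * I ν₁ x₁ - c₂ * I ν₂ x₂|
      ≤ L * ε⁻¹ * |x₁ - x₂| + C₀ * blDist ν₁ ν₂ + B * blDist ν₁ ν₂ := hmain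
    _ = L * ε⁻¹ * |x₁ - x₂| + (C₀ + B) * blDist ν₁ ν₂ := by ring
    _ ≤ K₀ * |x₁ - x₂| + K₀ * blDist ν₁ ν₂ :=
        add_le_add (mul_le_mul_of_nonneg_right (le_max_left _ _) habs)
          (mul_le_mul_of_nonneg_right (le_max_right _ _) hρ)
    _ = K₀ * (|x₁ - x₂| + blDist ν₁ ν₂) := by ring
    _ ≤ K₀ * (Real.sqrt 2 * Real.sqrt (|x₁ - x₂| ^ 2 + (blDist ν₁ ν₂) ^ 2)) :=
        mul_le_mul_of_nonneg_left (add_le_sqrt_two_mul _ _ habs hρ) hK0pos.le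
    _ = Real.sqrt 2 * K₀ * Real.sqrt (|x₁ - x₂| ^ 2 + (blDist ν₁ ν₂) ^ 2) := by ring
end

section
/- Let {N(x) : x ∈ ℝ} be a real-valued random field and suppose there exist α > 0, p > 1 and K such that E|N(x) − N(y)|^p ≤ K|x − y|^{1+α} for all x, y. Then for every λ > 0, E[sup_{x ∈ ℝ} |N(x)|^p e^{−λ|x|}] < ∞, provided E|N(0)|^p < ∞. -/
open MeasureTheory Real
open scoped ENNReal

set_option maxHeartbeats 1000000
section


private lemma my_iSup_rpow {ι : Sort*} (g : ι → ℝ≥0∞) {q : ℝ} (hq : 0 < q) :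
    (⨆ i, g i) ^ q = ⨆ i, g i ^ q := by
  refine Monotone.map_iSup_of_continuousAt ?_ (ENNReal.monotone_rpow_of_nonneg hq.le) ?_
  · exact ENNReal.continuous_rpow_const.continuousAt
  · simp [ENNReal.zero_rpow_of_pos hq]

private lemma my_lp_tsum_le {Ω : Type*} [MeasurableSpace Ω] (μ : Measure Ω) {p : ℝ}
    (hp : 1 ≤ p) (g : ℕ → Ω → ℝ≥0∞) (hg : ∀ j, Measurable (g j)) :
    (∫⁻ ω, (∑' j, g j ω) ^ p ∂μ) ^ (1 / p) ≤ ∑' j, (∫⁻ ω, g j ω ^ p ∂μ) ^ (1 / p) := by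
  have hp0 : 0 < p := lt_of_lt_of_le one_pos hp
  set F : ℕ → Ω → ℝ≥0∞ := fun k ω => ∑ j ∈ Finset.range k, g j ω with hF
  have hFmeas : ∀ k, Measurable (F k) := fun k =>
    Finset.measurable_sum _ fun j _ => hg j
  have hfin : ∀ k, (∫⁻ ω, F k ω ^ p ∂μ) ^ (1 / p)
      ≤ ∑ j ∈ Finset.range k, (∫⁻ ω, g j ω ^ p ∂μ) ^ (1 / p) := by
    intro k
    induction k with
    | zero =>
      simp only [hF, Finset.range_zero, Finset.sum_empty]
      simp only [ENNReal.zero_rpow_of_pos hp0, lintegral_zero,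
        ENNReal.zero_rpow_of_pos (by positivity : (0:ℝ) < 1/p), le_refl]
    | succ k ih =>
      have hsum : ∀ ω, F (k+1) ω = (F k + g k) ω := by
        intro ω; simp [hF, Finset.sum_range_succ]
      calc (∫⁻ ω, F (k+1) ω ^ p ∂μ) ^ (1/p)
          = (∫⁻ ω, ((F k + g k) ω) ^ p ∂μ) ^ (1/p) := by
            congr 1; refine lintegral_congr fun ω => by rw [hsum ω]
        _ ≤ (∫⁻ ω, F k ω ^ p ∂μ) ^ (1/p) + (∫⁻ ω, g k ω ^ p ∂μ) ^ (1/p) :=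
            ENNReal.lintegral_Lp_add_le (hFmeas k).aemeasurable (hg k).aemeasurable hp
        _ ≤ ∑ j ∈ Finset.range k, (∫⁻ ω, g j ω ^ p ∂μ) ^ (1/p)
            + (∫⁻ ω, g k ω ^ p ∂μ) ^ (1/p) := add_le_add_left ih _
        _ = ∑ j ∈ Finset.range (k+1), (∫⁻ ω, g j ω ^ p ∂μ) ^ (1/p) := by
            rw [Finset.sum_range_succ]
  have hmono : ∀ ω, Monotone fun k => F k ω := fun ω k l hkl =>
    Finset.sum_le_sum_of_subset (Finset.range_subset_range.2 hkl)
  have hlim : ∫⁻ ω, (∑' j, g j ω) ^ p ∂μ = ⨆ k, ∫⁻ ω, F k ω ^ p ∂μ := by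
    rw [← lintegral_iSup (fun k => (hFmeas k).pow_const p)
      (fun k l hkl ω => ENNReal.rpow_le_rpow (hmono ω hkl) hp0.le)]
    refine lintegral_congr fun ω => ?_
    rw [ENNReal.tsum_eq_iSup_nat, my_iSup_rpow _ hp0]
  have hbound : ∀ k, ∫⁻ ω, F k ω ^ p ∂μ
      ≤ (∑' j, (∫⁻ ω, g j ω ^ p ∂μ) ^ (1/p)) ^ p := by
    intro k
    have h1 : (∫⁻ ω, F k ω ^ p ∂μ) ^ (1/p) ≤ ∑' j, (∫⁻ ω, g j ω ^ p ∂μ) ^ (1/p) :=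
      (hfin k).trans (ENNReal.sum_le_tsum _)
    have h2 := ENNReal.rpow_le_rpow h1 hp0.le
    rwa [← ENNReal.rpow_mul, one_div, inv_mul_cancel₀ hp0.ne', ENNReal.rpow_one, ← one_div] at h2
  calc (∫⁻ ω, (∑' j, g j ω) ^ p ∂μ) ^ (1/p)
      = (⨆ k, ∫⁻ ω, F k ω ^ p ∂μ) ^ (1/p) := by rw [hlim]
    _ ≤ ((∑' j, (∫⁻ ω, g j ω ^ p ∂μ) ^ (1/p)) ^ p) ^ (1/p) :=
        ENNReal.rpow_le_rpow (iSup_le hbound) (by positivity)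
    _ = ∑' j, (∫⁻ ω, g j ω ^ p ∂μ) ^ (1/p) := by
        rw [← ENNReal.rpow_mul, mul_one_div, div_self hp0.ne', ENNReal.rpow_one]



/-- level-`j` dyadic increment max (as `ℝ≥0∞` sup). -/
private noncomputable def myDj (f : ℝ → ℝ) (n : ℝ) (j : ℕ) : ℝ≥0∞ :=
  ⨆ k : Fin (2 ^ j),
    ENNReal.ofReal |f (n + ((k : ℕ) + 1) / 2 ^ j) - f (n + (k : ℕ) / 2 ^ j)|

private lemma my_chain (f : ℝ → ℝ) (hf : Continuous f) (n x : ℝ)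
    (hx0 : n ≤ x) (hx1 : x ≤ n + 1) :
    ENNReal.ofReal |f x - f n| ≤ ∑' j : ℕ, myDj f n (j + 1) := by
  set t : ℝ := x - n with ht
  have ht0 : 0 ≤ t := by simp [ht]; linarith
  have ht1 : t ≤ 1 := by simp [ht]; linarith
  set kk : ℕ → ℕ := fun j => min (⌊t * 2 ^ j⌋₊) (2 ^ j - 1) with hkk
  set y : ℕ → ℝ := fun j => n + (kk j : ℝ) / 2 ^ j with hy
  have hpow_pos : ∀ j : ℕ, (0:ℝ) < 2 ^ j := fun j => by positivity
  have hk_le : ∀ j, kk j ≤ 2 ^ j - 1 := fun j => min_le_right _ _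
  -- floor facts
  have hs_le : ∀ j, (kk j : ℝ) ≤ t * 2 ^ j := by
    intro j
    have h1 : (⌊t * 2 ^ j⌋₊ : ℝ) ≤ t * 2 ^ j := Nat.floor_le (by positivity)
    have h2 : (kk j : ℝ) ≤ (⌊t * 2 ^ j⌋₊ : ℝ) := Nat.cast_le.2 (min_le_left _ _)
    linarith
  have hs_lt : ∀ j, t * 2 ^ j ≤ (kk j : ℝ) + 1 := by
    intro j
    rcases le_or_gt (⌊t * 2 ^ j⌋₊) (2 ^ j - 1) with h | h
    · have : kk j = ⌊t * 2 ^ j⌋₊ := min_eq_left h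
      rw [this]
      exact le_of_lt (Nat.lt_floor_add_one _)
    · have hkj : kk j = 2 ^ j - 1 := min_eq_right h.le
      have h2 : t * 2 ^ j ≤ 2 ^ j := by
        nlinarith [hpow_pos j]
      rw [hkj]
      have : ((2 ^ j - 1 : ℕ) : ℝ) + 1 = 2 ^ j := by
        have h1 : (1:ℕ) ≤ 2 ^ j := Nat.one_le_two_pow
        push_cast [Nat.cast_sub h1]
        ring
      rw [this]; exact h2
  -- adjacency
  have hstep : ∀ j, kk (j+1) = 2 * kk j ∨ kk (j+1) = 2 * kk j + 1 := by
    intro j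
    have h2s : t * 2 ^ (j+1) = t * 2 ^ j * 2 := by ring
    set a := ⌊t * 2 ^ j⌋₊ with ha
    set b := ⌊t * 2 ^ (j+1)⌋₊ with hb
    have hfl : (a : ℝ) ≤ t * 2 ^ j := Nat.floor_le (by positivity)
    have h2a : 2 * a ≤ b := by
      apply Nat.le_floor
      rw [h2s]; push_cast; linarith
    have hb2 : b ≤ 2 * a + 1 := by
      have hlt : t * 2 ^ (j+1) < ((2 * a + 2 : ℕ) : ℝ) := by
        have := Nat.lt_floor_add_one (t * 2 ^ j)
        rw [h2s]; push_cast; linarith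
      have := (Nat.floor_lt (by positivity)).2 hlt
      omega
    have hone : (1:ℕ) ≤ 2 ^ j := Nat.one_le_two_pow
    rcases le_or_gt a (2 ^ j - 1) with h | h
    · have hble : b ≤ 2 ^ (j+1) - 1 := by
        have : 2 * a + 1 ≤ 2 ^ (j+1) - 1 := by
          have : 2 ^ (j+1) = 2 * 2 ^ j := by ring
          omega
        omega
      have e1 : kk j = a := min_eq_left h
      have e2 : kk (j+1) = b := min_eq_left hble
      rw [e1, e2]; omega
    · -- a ≥ 2^j forces t*2^j = 2^j
      have hge : (2 ^ j : ℝ) ≤ t * 2 ^ j := by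
        calc (2 ^ j : ℝ) = ((2 ^ j : ℕ) : ℝ) := by push_cast; ring
          _ ≤ (a : ℝ) := by
              have hna : 2 ^ j ≤ a := by omega
              exact_mod_cast hna
          _ ≤ t * 2 ^ j := hfl
      have hle' : t * 2 ^ j ≤ 2 ^ j := by nlinarith [hpow_pos j]
      have heq : t * 2 ^ j = 2 ^ j := le_antisymm hle' hge
      have hbval : 2 ^ (j+1) ≤ b := by
        apply Nat.le_floor
        rw [h2s, heq]; push_cast; ring_nf; rfl
      have e1 : kk j = 2 ^ j - 1 := min_eq_right h.le
      have e2 : kk (j+1) = 2 ^ (j+1) - 1 := min_eq_right (by omega)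
      rw [e1, e2]
      right
      have : 2 ^ (j+1) = 2 * 2 ^ j := by ring
      omega
  -- y 0 = n
  have hy0 : y 0 = n := by
    have : kk 0 = 0 := by simp [hkk]
    simp [hy, this]
  -- distance
  have hdist : ∀ j, |x - y j| ≤ (1/2) ^ j := by
    intro j
    have h1 := hs_le j
    have h2 := hs_lt j
    have hxy : x - y j = t - (kk j : ℝ) / 2 ^ j := by simp [hy, ht]; ring
    rw [hxy, abs_le]
    constructor
    · have : (kk j : ℝ) / 2 ^ j ≤ t := by
        rw [div_le_iff₀ (hpow_pos j)]; linarith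
      have hp : (0:ℝ) ≤ (1/2)^j := by positivity
      linarith
    · have hp2 := hpow_pos j
      have hhalf : ((1:ℝ)/2)^j * 2^j = 1 := by rw [← mul_pow]; norm_num
      have hdiv : (kk j : ℝ)/2^j * 2^j = (kk j : ℝ) := div_mul_cancel₀ _ hp2.ne'
      nlinarith [hs_lt j]
  -- telescoping
  have htel : ∀ J, ENNReal.ofReal |f (y J) - f n|
      ≤ ∑ j ∈ Finset.range J, myDj f n (j + 1) := by
    intro J
    induction J with
    | zero => simp [hy0]
    | succ J ih =>
      have hkey : ENNReal.ofReal |f (y (J+1)) - f (y J)| ≤ myDj f n (J + 1) := by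
        rcases hstep J with h | h
        · -- equal points
          have : y (J+1) = y J := by
            simp only [hy, h]
            congr 1
            push_cast
            rw [div_eq_div_iff (hpow_pos (J+1)).ne' (hpow_pos J).ne']
            ring
          rw [this]
          simp
        · -- adjacent
          have hlt : 2 * kk J < 2 ^ (J+1) := by
            have := hk_le J
            have hone : (1:ℕ) ≤ 2 ^ J := Nat.one_le_two_pow
            have : 2 ^ (J+1) = 2 * 2 ^ J := by ring
            omega
          have hyJ1 : y (J+1) = n + ((2 * kk J : ℕ) + 1 : ℝ) / 2 ^ (J+1) := by
            simp only [hy, h]; push_cast; ring_nf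
          have hyJ : y J = n + ((2 * kk J : ℕ) : ℝ) / 2 ^ (J+1) := by
            simp only [hy]
            congr 1
            push_cast
            rw [div_eq_div_iff (hpow_pos J).ne' (hpow_pos (J+1)).ne']
            ring
          have := le_iSup (fun k : Fin (2 ^ (J+1)) =>
            ENNReal.ofReal |f (n + ((k : ℕ) + 1) / 2 ^ (J+1)) - f (n + (k : ℕ) / 2 ^ (J+1))|)
            ⟨2 * kk J, hlt⟩
          simp only at this
          rw [myDj]
          refine le_trans ?_ this
          rw [hyJ1, hyJ]
      calc ENNReal.ofReal |f (y (J+1)) - f n|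
          ≤ ENNReal.ofReal (|f (y (J+1)) - f (y J)| + |f (y J) - f n|) := by
            apply ENNReal.ofReal_le_ofReal
            exact abs_sub_le _ _ _
        _ ≤ ENNReal.ofReal |f (y (J+1)) - f (y J)| + ENNReal.ofReal |f (y J) - f n| :=
            ENNReal.ofReal_add_le
        _ ≤ myDj f n (J+1) + ∑ j ∈ Finset.range J, myDj f n (j + 1) :=
            add_le_add hkey ih
        _ = ∑ j ∈ Finset.range (J+1), myDj f n (j + 1) := by
            rw [Finset.sum_range_succ]; ring
  -- limit
  have hytend : Filter.Tendsto y Filter.atTop (nhds x) := by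
    rw [tendsto_iff_dist_tendsto_zero]
    apply squeeze_zero (fun j => dist_nonneg) (fun j => ?_)
      (tendsto_pow_atTop_nhds_zero_of_lt_one (by norm_num) (by norm_num : (1/2:ℝ) < 1))
    rw [Real.dist_eq, abs_sub_comm]
    exact hdist j
  have hftend : Filter.Tendsto (fun J => ENNReal.ofReal |f (y J) - f n|)
      Filter.atTop (nhds (ENNReal.ofReal |f x - f n|)) := by
    apply (ENNReal.continuous_ofReal.tendsto _).comp
    have hc : Continuous fun z => |f z - f n| := (hf.sub continuous_const).abs
    exact (hc.tendsto x).comp hytend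
  refine le_of_tendsto hftend (Filter.Eventually.of_forall fun J => ?_)
  exact (htel J).trans (ENNReal.sum_le_tsum _)


private lemma my_rpow_inv_le {p : ℝ} (hp0 : 0 < p) {X C : ℝ≥0∞} (h : X ^ (1/p) ≤ C) :
    X ≤ C ^ p := by
  have h2 := ENNReal.rpow_le_rpow h hp0.le
  rwa [← ENNReal.rpow_mul, one_div, inv_mul_cancel₀ hp0.ne', ENNReal.rpow_one] at h2

section moment

variable {Ω : Type*} [MeasurableSpace Ω] (P : Measure Ω) [IsProbabilityMeasure P]

private lemma myDj_moment (N : ℝ → Ω → ℝ)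
    (hmeas : ∀ x, Measurable (N x))
    {α p K : ℝ} (hα : 0 < α) (hp : 1 < p) (hK : 0 ≤ K)
    (hmom : ∀ x y : ℝ, ∫⁻ ω, ENNReal.ofReal (|N x ω - N y ω| ^ p) ∂P
      ≤ ENNReal.ofReal (K * |x - y| ^ (1 + α)))
    (n : ℝ) (m : ℕ) :
    ∫⁻ ω, (myDj (fun y => N y ω) n m) ^ p ∂P
      ≤ ENNReal.ofReal (K * (2:ℝ) ^ (-(m:ℝ) * α)) := by
  have hp0 : 0 < p := lt_trans one_pos hp
  have hpow_pos : (0:ℝ) < 2 ^ m := by positivity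
  -- pointwise: Dj^p ≤ sum over k of ofReal (|inc|^p)
  have hpt : ∀ ω, (myDj (fun y => N y ω) n m) ^ p
      ≤ ∑ k : Fin (2 ^ m),
        ENNReal.ofReal (|N (n + ((k:ℕ)+1)/2^m) ω - N (n + (k:ℕ)/2^m) ω| ^ p) := by
    intro ω
    rw [myDj, my_iSup_rpow _ hp0]
    refine iSup_le fun k => ?_
    rw [ENNReal.ofReal_rpow_of_nonneg (abs_nonneg _) hp0.le]
    exact Finset.single_le_sum
      (f := fun i : Fin (2^m) => ENNReal.ofReal
        (|N (n + ((i:ℕ)+1)/2^m) ω - N (n + (i:ℕ)/2^m) ω| ^ p))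
      (fun i _ => zero_le) (Finset.mem_univ k)
  calc ∫⁻ ω, (myDj (fun y => N y ω) n m) ^ p ∂P
      ≤ ∫⁻ ω, ∑ k : Fin (2 ^ m),
          ENNReal.ofReal (|N (n + ((k:ℕ)+1)/2^m) ω - N (n + (k:ℕ)/2^m) ω| ^ p) ∂P :=
        lintegral_mono hpt
    _ = ∑ k : Fin (2 ^ m), ∫⁻ ω,
          ENNReal.ofReal (|N (n + ((k:ℕ)+1)/2^m) ω - N (n + (k:ℕ)/2^m) ω| ^ p) ∂P := by
        refine lintegral_finset_sum _ fun k _ => ?_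
        exact (((hmeas _).sub (hmeas _)).abs.pow measurable_const).ennreal_ofReal
    _ ≤ ∑ _k : Fin (2 ^ m), ENNReal.ofReal (K * ((1:ℝ)/2^m) ^ (1 + α)) := by
        refine Finset.sum_le_sum fun k _ => ?_
        have h := hmom (n + ((k:ℕ)+1)/2^m) (n + (k:ℕ)/2^m)
        have hd : (n + ((k:ℕ)+1)/2^m) - (n + (k:ℕ)/2^m) = (1:ℝ)/2^m := by ring
        rw [hd] at h
        rwa [abs_of_pos (by positivity)] at h
    _ = (2^m : ℕ) * ENNReal.ofReal (K * ((1:ℝ)/2^m) ^ (1 + α)) := by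
        rw [Finset.sum_const, Finset.card_univ, Fintype.card_fin, nsmul_eq_mul]
    _ = ENNReal.ofReal (K * (2:ℝ) ^ (-(m:ℝ) * α)) := by
        rw [show ((2^m : ℕ) : ℝ≥0∞) = ENNReal.ofReal ((2^m : ℕ) : ℝ) by
          rw [ENNReal.ofReal_natCast]]
        rw [← ENNReal.ofReal_mul (by positivity)]
        congr 1
        have h2m : ((2^m : ℕ) : ℝ) = (2:ℝ) ^ (m:ℝ) := by
          push_cast
          rw [Real.rpow_natCast]
        have h1 : ((1:ℝ)/2^m) = (2:ℝ) ^ (-(m:ℝ)) := by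
          rw [Real.rpow_neg (by norm_num), Real.rpow_natCast]
          rw [one_div]
        rw [h1, ← Real.rpow_natCast (2:ℝ) m] at *
        rw [← Real.rpow_mul (by norm_num : (0:ℝ) ≤ 2)]
        rw [h2m]
        rw [show ((2:ℝ)^(m:ℝ) * (K * 2 ^ (-(m:ℝ) * (1+α)))) =
          K * ((2:ℝ)^(m:ℝ) * 2 ^ (-(m:ℝ) * (1+α))) by ring]
        rw [← Real.rpow_add (by norm_num : (0:ℝ) < 2)]
        congr 1
        ring
end moment

end

/-- Lemma 3.4: if a continuous random field `N` satisfies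
`E|N(x) − N(y)|^p ≤ K|x − y|^{1+α}` with `α > 0`, `p > 1`, and `E|N(0)|^p < ∞`,
then `E[sup_x |N(x)|^p e^{−λ|x|}] < ∞` for every `λ > 0`. -/
theorem random_field_weighted_sup_moment
    {Ω : Type*} [MeasurableSpace Ω] (P : Measure Ω) [IsProbabilityMeasure P]
    (N : ℝ → Ω → ℝ)
    (hmeas : ∀ x, Measurable (N x))
    (hcont : ∀ ω, Continuous fun x => N x ω)
    (α p K : ℝ) (hα : 0 < α) (hp : 1 < p) (hK : 0 ≤ K)
    (hmom : ∀ x y : ℝ, ∫⁻ ω, ENNReal.ofReal (|N x ω - N y ω| ^ p) ∂P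
      ≤ ENNReal.ofReal (K * |x - y| ^ (1 + α)))
    (h0 : ∫⁻ ω, ENNReal.ofReal (|N 0 ω| ^ p) ∂P < ⊤)
    (lam : ℝ) (hlam : 0 < lam) :
    ∫⁻ ω, ⨆ x : ℝ, ENNReal.ofReal (|N x ω| ^ p * Real.exp (-lam * |x|)) ∂P < ⊤ := by
  have hp0 : 0 < p := lt_trans one_pos hp
  have hq0 : 0 < 1 + α := by linarith
  -- measurability of the dyadic increments
  have hDmeas : ∀ (n : ℝ) (m : ℕ), Measurable fun ω => myDj (fun y => N y ω) n m := by
    intro n m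
    unfold myDj
    exact Measurable.iSup fun k => (((hmeas _).sub (hmeas _)).abs).ennreal_ofReal
  set G : ℝ → Ω → ℝ≥0∞ := fun n ω => ∑' j : ℕ, myDj (fun y => N y ω) n (j+1) with hG
  have hGmeas : ∀ n, Measurable (G n) := fun n =>
    Measurable.ennreal_tsum fun j => hDmeas n (j+1)
  set B : ℝ → Ω → ℝ≥0∞ := fun n ω => ENNReal.ofReal |N n ω| + G n ω with hB
  have hBmeas : ∀ n, Measurable (B n) := fun n =>
    ((hmeas n).abs.ennreal_ofReal).add (hGmeas n)
  -- pointwise domination of the sup by a sum over integers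
  have hdom : ∀ ω, (⨆ x : ℝ, ENNReal.ofReal (|N x ω| ^ p * Real.exp (-lam * |x|)))
      ≤ ∑' n : ℤ, ENNReal.ofReal (Real.exp (lam - lam * |((n:ℤ):ℝ)|)) * (B (n:ℝ) ω) ^ p := by
    intro ω
    refine iSup_le fun x => ?_
    set n : ℤ := ⌊x⌋ with hn
    have hn1 : ((n:ℤ):ℝ) ≤ x := Int.floor_le x
    have hn2 : x ≤ ((n:ℤ):ℝ) + 1 := (Int.lt_floor_add_one x).le
    have habs : |((n:ℤ):ℝ)| ≤ |x| + 1 := by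
      have h3 : |((n:ℤ):ℝ) - x| ≤ 1 := abs_le.2 ⟨by linarith, by linarith⟩
      calc |((n:ℤ):ℝ)| = |x + (((n:ℤ):ℝ) - x)| := by ring_nf
        _ ≤ |x| + |((n:ℤ):ℝ) - x| := abs_add_le _ _
        _ ≤ |x| + 1 := by linarith
    have hE : ENNReal.ofReal (Real.exp (-lam * |x|))
        ≤ ENNReal.ofReal (Real.exp (lam - lam * |((n:ℤ):ℝ)|)) := by
      apply ENNReal.ofReal_le_ofReal
      apply Real.exp_le_exp.2
      nlinarith
    have hA : ENNReal.ofReal (|N x ω| ^ p) ≤ (B (n:ℝ) ω) ^ p := by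
      rw [← ENNReal.ofReal_rpow_of_nonneg (abs_nonneg _) hp0.le]
      refine ENNReal.rpow_le_rpow ?_ hp0.le
      have htri : |N x ω| ≤ |N ((n:ℤ):ℝ) ω| + |N x ω - N ((n:ℤ):ℝ) ω| := by
        have := abs_add_le (N ((n:ℤ):ℝ) ω) (N x ω - N ((n:ℤ):ℝ) ω)
        simpa using this
      calc ENNReal.ofReal |N x ω|
          ≤ ENNReal.ofReal (|N ((n:ℤ):ℝ) ω| + |N x ω - N ((n:ℤ):ℝ) ω|) :=
            ENNReal.ofReal_le_ofReal htri
        _ = ENNReal.ofReal |N ((n:ℤ):ℝ) ω| + ENNReal.ofReal |N x ω - N ((n:ℤ):ℝ) ω| :=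
            ENNReal.ofReal_add (abs_nonneg _) (abs_nonneg _)
        _ ≤ B ((n:ℤ):ℝ) ω := by
            refine add_le_add_right ?_ _
            exact my_chain (fun y => N y ω) (hcont ω) ((n:ℤ):ℝ) x hn1 hn2
    have hterm : ENNReal.ofReal (|N x ω| ^ p * Real.exp (-lam * |x|))
        ≤ ENNReal.ofReal (Real.exp (lam - lam * |((n:ℤ):ℝ)|)) * (B (n:ℝ) ω) ^ p := by
      calc ENNReal.ofReal (|N x ω| ^ p * Real.exp (-lam * |x|))
          = ENNReal.ofReal (|N x ω| ^ p) * ENNReal.ofReal (Real.exp (-lam * |x|)) :=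
            ENNReal.ofReal_mul (by positivity)
        _ ≤ (B (n:ℝ) ω) ^ p * ENNReal.ofReal (Real.exp (lam - lam * |((n:ℤ):ℝ)|)) :=
            mul_le_mul' hA hE
        _ = _ := mul_comm _ _
    exact hterm.trans (ENNReal.le_tsum n)
  -- split the integral
  have hBp_meas : ∀ n : ℝ, Measurable fun ω => (B n ω) ^ p := fun n =>
    (hBmeas n).pow measurable_const
  have hsplit : ∫⁻ ω, ⨆ x : ℝ, ENNReal.ofReal (|N x ω| ^ p * Real.exp (-lam * |x|)) ∂P
      ≤ ∑' n : ℤ, ENNReal.ofReal (Real.exp (lam - lam * |((n:ℤ):ℝ)|))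
        * ∫⁻ ω, (B ((n:ℤ):ℝ) ω) ^ p ∂P := by
    calc ∫⁻ ω, ⨆ x : ℝ, ENNReal.ofReal (|N x ω| ^ p * Real.exp (-lam * |x|)) ∂P
        ≤ ∫⁻ ω, ∑' n : ℤ, ENNReal.ofReal (Real.exp (lam - lam * |((n:ℤ):ℝ)|))
            * (B ((n:ℤ):ℝ) ω) ^ p ∂P := lintegral_mono hdom
      _ = ∑' n : ℤ, ∫⁻ ω, ENNReal.ofReal (Real.exp (lam - lam * |((n:ℤ):ℝ)|))
            * (B ((n:ℤ):ℝ) ω) ^ p ∂P :=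
          lintegral_tsum fun n => ((hBp_meas _).const_mul _).aemeasurable
      _ = ∑' n : ℤ, ENNReal.ofReal (Real.exp (lam - lam * |((n:ℤ):ℝ)|))
            * ∫⁻ ω, (B ((n:ℤ):ℝ) ω) ^ p ∂P := by
          refine tsum_congr fun n => ?_
          rw [lintegral_const_mul _ (hBp_meas _)]
  -- Lp bound for G
  set Cg : ℝ≥0∞ := ∑' j : ℕ, ENNReal.ofReal ((K * (2:ℝ) ^ (-((j:ℝ)+1) * α)) ^ (1/p)) with hCg
  have hLpG : ∀ n : ℝ, (∫⁻ ω, (G n ω) ^ p ∂P) ^ (1/p) ≤ Cg := by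
    intro n
    refine (my_lp_tsum_le P hp.le _ (fun j => hDmeas n (j+1))).trans ?_
    refine ENNReal.tsum_le_tsum fun j => ?_
    have h1 := ENNReal.rpow_le_rpow
      (myDj_moment P N hmeas hα hp hK hmom n (j+1)) (by positivity : (0:ℝ) ≤ 1/p)
    refine h1.trans_eq ?_
    rw [ENNReal.ofReal_rpow_of_nonneg
      (mul_nonneg hK (Real.rpow_nonneg (by norm_num) _)) (by positivity)]
    congr 3
    push_cast
    ring
  -- Cg is finite
  have hr0 : (0:ℝ) ≤ (2:ℝ) ^ (-(α/p)) := Real.rpow_nonneg (by norm_num) _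
  have hr1 : (2:ℝ) ^ (-(α/p)) < 1 :=
    Real.rpow_lt_one_of_one_lt_of_neg (by norm_num) (neg_neg_of_pos (by positivity))
  have hCgfin : Cg ≠ ⊤ := by
    set r : ℝ := (2:ℝ) ^ (-(α/p)) with hr
    have hu : ∀ j : ℕ, (K * (2:ℝ) ^ (-((j:ℝ)+1) * α)) ^ (1/p)
        = (K ^ (1/p) * r) * r ^ j := by
      intro j
      rw [Real.mul_rpow hK (Real.rpow_nonneg (by norm_num) _)]
      rw [← Real.rpow_mul (by norm_num : (0:ℝ) ≤ 2)]
      have : r ^ j = (2:ℝ) ^ (-(α/p) * (j:ℝ)) := by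
        rw [hr, ← Real.rpow_natCast ((2:ℝ) ^ (-(α/p))) j,
          ← Real.rpow_mul (by norm_num : (0:ℝ) ≤ 2)]
      rw [this, hr]
      rw [mul_assoc (K ^ (1/p))]
      rw [← Real.rpow_add (by norm_num : (0:ℝ) < 2)]
      congr 1
      ring
    have hsum : Summable fun j : ℕ => (K * (2:ℝ) ^ (-((j:ℝ)+1) * α)) ^ (1/p) := by
      rw [show (fun j : ℕ => (K * (2:ℝ) ^ (-((j:ℝ)+1) * α)) ^ (1/p))
        = fun j : ℕ => (K ^ (1/p) * r) * r ^ j from funext hu]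
      exact (summable_geometric_of_lt_one hr0 hr1).mul_left _
    rw [hCg, ← ENNReal.ofReal_tsum_of_nonneg
      (fun j => Real.rpow_nonneg (mul_nonneg hK (Real.rpow_nonneg (by norm_num) _)) _) hsum]
    exact ENNReal.ofReal_ne_top
  -- Lp bound for |N n|
  set M0 : ℝ≥0∞ := (∫⁻ ω, ENNReal.ofReal (|N 0 ω| ^ p) ∂P) ^ (1/p) with hM0def
  have hM0 : M0 ≠ ⊤ := by
    rw [hM0def]
    exact ENNReal.rpow_ne_top_of_nonneg (by positivity) h0.ne
  have hLpf : ∀ n : ℝ, (∫⁻ ω, (ENNReal.ofReal |N n ω|) ^ p ∂P) ^ (1/p)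
      ≤ M0 + ENNReal.ofReal ((K * |n| ^ (1 + α)) ^ (1/p)) := by
    intro n
    set f0 : Ω → ℝ≥0∞ := fun ω => ENNReal.ofReal |N 0 ω| with hf0
    set g0 : Ω → ℝ≥0∞ := fun ω => ENNReal.ofReal |N n ω - N 0 ω| with hg0
    have hpt : ∀ ω, ENNReal.ofReal |N n ω| ≤ (f0 + g0) ω := by
      intro ω
      have htri : |N n ω| ≤ |N 0 ω| + |N n ω - N 0 ω| := by
        have := abs_add_le (N 0 ω) (N n ω - N 0 ω)
        simpa using this
      calc ENNReal.ofReal |N n ω| ≤ ENNReal.ofReal (|N 0 ω| + |N n ω - N 0 ω|) :=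
            ENNReal.ofReal_le_ofReal htri
        _ = f0 ω + g0 ω := ENNReal.ofReal_add (abs_nonneg _) (abs_nonneg _)
        _ = (f0 + g0) ω := rfl
    have hf0m : Measurable f0 := (hmeas 0).abs.ennreal_ofReal
    have hg0m : Measurable g0 := ((hmeas n).sub (hmeas 0)).abs.ennreal_ofReal
    calc (∫⁻ ω, (ENNReal.ofReal |N n ω|) ^ p ∂P) ^ (1/p)
        ≤ (∫⁻ ω, ((f0 + g0) ω) ^ p ∂P) ^ (1/p) := by
          refine ENNReal.rpow_le_rpow (lintegral_mono fun ω => ?_) (by positivity)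
          exact ENNReal.rpow_le_rpow (hpt ω) hp0.le
      _ ≤ (∫⁻ ω, f0 ω ^ p ∂P) ^ (1/p) + (∫⁻ ω, g0 ω ^ p ∂P) ^ (1/p) :=
          ENNReal.lintegral_Lp_add_le hf0m.aemeasurable hg0m.aemeasurable hp.le
      _ ≤ M0 + ENNReal.ofReal ((K * |n| ^ (1 + α)) ^ (1/p)) := by
          refine add_le_add ?_ ?_
          · rw [hM0def]
            refine le_of_eq ?_
            congr 1
            refine lintegral_congr fun ω => ?_
            rw [hf0, ENNReal.ofReal_rpow_of_nonneg (abs_nonneg _) hp0.le]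
          · have h1 : ∫⁻ ω, g0 ω ^ p ∂P ≤ ENNReal.ofReal (K * |n| ^ (1 + α)) := by
              have := hmom n 0
              rw [sub_zero] at this
              refine le_trans (le_of_eq ?_) this
              refine lintegral_congr fun ω => ?_
              rw [hg0, ENNReal.ofReal_rpow_of_nonneg (abs_nonneg _) hp0.le]
            refine le_trans (ENNReal.rpow_le_rpow h1 (by positivity)) ?_
            rw [ENNReal.ofReal_rpow_of_nonneg
              (mul_nonneg hK (Real.rpow_nonneg (abs_nonneg _) _)) (by positivity)]
  -- combine into the main Lp bound for B n
  have hEn : ∀ n : ℝ, ∫⁻ ω, (B n ω) ^ p ∂P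
      ≤ (M0 + Cg + ENNReal.ofReal ((K * |n| ^ (1 + α)) ^ (1/p))) ^ p := by
    intro n
    refine my_rpow_inv_le hp0 ?_
    have hfm : Measurable fun ω => ENNReal.ofReal |N n ω| := (hmeas n).abs.ennreal_ofReal
    calc (∫⁻ ω, (B n ω) ^ p ∂P) ^ (1/p)
        = (∫⁻ ω, (((fun ω => ENNReal.ofReal |N n ω|) + G n) ω) ^ p ∂P) ^ (1/p) := rfl
      _ ≤ (∫⁻ ω, (ENNReal.ofReal |N n ω|) ^ p ∂P) ^ (1/p)
          + (∫⁻ ω, (G n ω) ^ p ∂P) ^ (1/p) :=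
          ENNReal.lintegral_Lp_add_le hfm.aemeasurable (hGmeas n).aemeasurable hp.le
      _ ≤ (M0 + ENNReal.ofReal ((K * |n| ^ (1 + α)) ^ (1/p))) + Cg :=
          add_le_add (hLpf n) (hLpG n)
      _ = M0 + Cg + ENNReal.ofReal ((K * |n| ^ (1 + α)) ^ (1/p)) := by ring
  -- turn the bound into a real-valued one
  set c0 : ℝ := (M0 + Cg).toReal with hc0def
  have hc0 : (0:ℝ) ≤ c0 := ENNReal.toReal_nonneg
  have hMCg : M0 + Cg = ENNReal.ofReal c0 := by
    rw [hc0def, ENNReal.ofReal_toReal (ENNReal.add_ne_top.2 ⟨hM0, hCgfin⟩)]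
  have hEn' : ∀ n : ℝ, ∫⁻ ω, (B n ω) ^ p ∂P
      ≤ ENNReal.ofReal ((c0 + (K * |n| ^ (1 + α)) ^ (1/p)) ^ p) := by
    intro n
    refine (hEn n).trans (le_of_eq ?_)
    rw [hMCg, ← ENNReal.ofReal_add hc0
      (Real.rpow_nonneg (mul_nonneg hK (Real.rpow_nonneg (abs_nonneg _) _)) _)]
    rw [ENNReal.ofReal_rpow_of_nonneg (by positivity) hp0.le]
  -- final summation over the integers
  set m : ℕ := ⌈(1:ℝ) + α⌉₊ with hm
  set K' : ℝ := K ^ (1/p) with hK'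
  have hK'0 : 0 ≤ K' := Real.rpow_nonneg hK _
  set C2 : ℝ := Real.exp lam * (c0 + K') ^ p with hC2
  have hC20 : 0 ≤ C2 := mul_nonneg (Real.exp_nonneg _) (Real.rpow_nonneg (by linarith) _)
  set v : ℤ → ℝ := fun n => Real.exp (-(lam * |((n:ℤ):ℝ)|)) * (1 + |((n:ℤ):ℝ)|) ^ m with hv
  have hpoly : ∀ n : ℤ, Real.exp (lam - lam * |((n:ℤ):ℝ)|)
      * (c0 + (K * |((n:ℤ):ℝ)| ^ (1 + α)) ^ (1/p)) ^ p ≤ C2 * v n := by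
    intro n
    set a : ℝ := |((n:ℤ):ℝ)| with ha
    have ha0 : 0 ≤ a := abs_nonneg _
    have h1a : (1:ℝ) ≤ 1 + a := by linarith
    have e1 : (K * a ^ (1 + α)) ^ (1/p) = K' * a ^ ((1+α)/p) := by
      rw [Real.mul_rpow hK (Real.rpow_nonneg ha0 _), ← Real.rpow_mul ha0, mul_one_div]
    have e2 : a ^ ((1+α)/p) ≤ (1 + a) ^ ((1+α)/p) :=
      Real.rpow_le_rpow ha0 (by linarith) (by positivity)
    have e3 : (1:ℝ) ≤ (1 + a) ^ ((1+α)/p) := by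
      calc (1:ℝ) = 1 ^ ((1+α)/p) := (Real.one_rpow _).symm
        _ ≤ (1 + a) ^ ((1+α)/p) := Real.rpow_le_rpow (by norm_num) h1a (by positivity)
    have e4 : c0 + (K * a ^ (1 + α)) ^ (1/p) ≤ (c0 + K') * (1 + a) ^ ((1+α)/p) := by
      rw [e1, add_mul]
      exact add_le_add (le_mul_of_one_le_right hc0 e3) (mul_le_mul_of_nonneg_left e2 hK'0)
    have e5 : (c0 + (K * a ^ (1 + α)) ^ (1/p)) ^ p ≤ (c0 + K') ^ p * (1 + a) ^ (1 + α) := by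
      calc (c0 + (K * a ^ (1+α)) ^ (1/p)) ^ p
          ≤ ((c0 + K') * (1 + a) ^ ((1+α)/p)) ^ p := by
            refine Real.rpow_le_rpow ?_ e4 hp0.le
            have : 0 ≤ (K * a ^ (1+α)) ^ (1/p) :=
              Real.rpow_nonneg (mul_nonneg hK (Real.rpow_nonneg ha0 _)) _
            linarith
        _ = (c0 + K') ^ p * ((1 + a) ^ ((1+α)/p)) ^ p :=
            Real.mul_rpow (by linarith) (Real.rpow_nonneg (by linarith) _)
        _ = (c0 + K') ^ p * (1 + a) ^ (1 + α) := by
            rw [← Real.rpow_mul (by linarith : (0:ℝ) ≤ 1 + a), div_mul_cancel₀ _ hp0.ne']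
    have e6 : (1 + a) ^ (1 + α) ≤ (1 + a) ^ ((m:ℕ):ℝ) :=
      Real.rpow_le_rpow_of_exponent_le h1a (Nat.le_ceil _)
    have e7 : Real.exp (lam - lam * a) = Real.exp lam * Real.exp (-(lam * a)) := by
      rw [← Real.exp_add]; ring_nf
    calc Real.exp (lam - lam * a) * (c0 + (K * a ^ (1+α)) ^ (1/p)) ^ p
        ≤ Real.exp (lam - lam * a) * ((c0 + K') ^ p * (1 + a) ^ ((m:ℕ):ℝ)) := by
          refine mul_le_mul_of_nonneg_left (e5.trans ?_) (Real.exp_nonneg _)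
          exact mul_le_mul_of_nonneg_left e6 (Real.rpow_nonneg (by linarith) _)
      _ = C2 * v n := by
          rw [e7, hC2, Real.rpow_natCast]
          simp only [hv, ← ha]
          ring
  have hrexp : Real.exp (-lam) < 1 := by
    rw [Real.exp_lt_one_iff]; linarith
  have hexpk : ∀ k : ℕ, Real.exp (-(lam * (k:ℝ))) = Real.exp (-lam) ^ k := by
    intro k
    rw [← Real.exp_nat_mul]
    ring_nf
  have hnat : Summable fun k : ℕ => Real.exp (-(lam * (k:ℝ))) * (1 + (k:ℝ)) ^ m := by
    have hbase : Summable fun k : ℕ => ((k:ℝ)) ^ m * Real.exp (-lam) ^ k := by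
      refine summable_pow_mul_geometric_of_norm_lt_one m ?_
      rw [Real.norm_eq_abs, abs_of_pos (Real.exp_pos _)]
      exact hrexp
    have hshift : Summable fun k : ℕ => (((k:ℕ):ℝ) + 1) ^ m * Real.exp (-lam) ^ (k+1) := by
      have := (summable_nat_add_iff 1).2 hbase
      refine this.congr fun k => ?_
      push_cast
      ring
    have := hshift.mul_right (Real.exp (-lam))⁻¹
    refine this.congr fun k => ?_
    have hne : Real.exp (-lam) ≠ 0 := (Real.exp_pos _).ne'
    rw [hexpk k, pow_succ]
    field_simp
    ring
  have hvsum : Summable v := by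
    refine Summable.of_nat_of_neg ?_ ?_
    · refine hnat.congr fun k => ?_
      have hcast : |((((k:ℕ)):ℤ):ℝ)| = (k:ℝ) := by
        push_cast
        exact abs_of_nonneg (Nat.cast_nonneg k)
      simp only [hv, hcast]
    · refine hnat.congr fun k => ?_
      have hcast : |(((-(k:ℕ)):ℤ):ℝ)| = (k:ℝ) := by
        push_cast
        rw [abs_neg]
        exact abs_of_nonneg (Nat.cast_nonneg k)
      simp only [hv, hcast]
  have hufin : (∑' n : ℤ, ENNReal.ofReal (Real.exp (lam - lam * |((n:ℤ):ℝ)|))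
      * ∫⁻ ω, (B ((n:ℤ):ℝ) ω) ^ p ∂P) < ⊤ := by
    have hle : ∀ n : ℤ, ENNReal.ofReal (Real.exp (lam - lam * |((n:ℤ):ℝ)|))
        * ∫⁻ ω, (B ((n:ℤ):ℝ) ω) ^ p ∂P ≤ ENNReal.ofReal C2 * ENNReal.ofReal (v n) := by
      intro n
      calc ENNReal.ofReal (Real.exp (lam - lam * |((n:ℤ):ℝ)|))
            * ∫⁻ ω, (B ((n:ℤ):ℝ) ω) ^ p ∂P
          ≤ ENNReal.ofReal (Real.exp (lam - lam * |((n:ℤ):ℝ)|)) *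
            ENNReal.ofReal ((c0 + (K * |((n:ℤ):ℝ)| ^ (1 + α)) ^ (1/p)) ^ p) :=
            mul_le_mul_right (hEn' _) _
        _ = ENNReal.ofReal (Real.exp (lam - lam * |((n:ℤ):ℝ)|)
            * (c0 + (K * |((n:ℤ):ℝ)| ^ (1+α)) ^ (1/p)) ^ p) :=
            (ENNReal.ofReal_mul (Real.exp_nonneg _)).symm
        _ ≤ ENNReal.ofReal (C2 * v n) := ENNReal.ofReal_le_ofReal (hpoly n)
        _ = ENNReal.ofReal C2 * ENNReal.ofReal (v n) := ENNReal.ofReal_mul hC20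
    have hvnn : ∀ n : ℤ, 0 ≤ v n := by
      intro n
      simp only [hv]
      positivity
    calc (∑' n : ℤ, ENNReal.ofReal (Real.exp (lam - lam * |((n:ℤ):ℝ)|))
          * ∫⁻ ω, (B ((n:ℤ):ℝ) ω) ^ p ∂P)
        ≤ ∑' n : ℤ, ENNReal.ofReal C2 * ENNReal.ofReal (v n) := ENNReal.tsum_le_tsum hle
      _ = ENNReal.ofReal C2 * ∑' n : ℤ, ENNReal.ofReal (v n) := ENNReal.tsum_mul_left
      _ = ENNReal.ofReal C2 * ENNReal.ofReal (∑' n : ℤ, v n) := by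
          rw [ENNReal.ofReal_tsum_of_nonneg hvnn hvsum]
      _ < ⊤ := ENNReal.mul_lt_top ENNReal.ofReal_lt_top ENNReal.ofReal_lt_top
  exact lt_of_le_of_lt hsplit hufin
end
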